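/- Let q and t = 2r be integers with q ≥ t+1 and r ≥ 1, and define Δ(k) = C(q+1, k-1)*C(q-1, t-k) - C(q, k-2)*C(q, t-k+1) for k in [1, t+1]. Then the weighted sum Σ_{k=1}^{t+1} (k-1) * Δ(k) is strictly negative. -/

import Mathlib

open Finset

lemma vander (m n k : ℕ) :
    ∑ i ∈ Finset.range (k+1), m.choose i * n.choose (k-i) = (m+n).choose k := by
  rw [Nat.add_choose_eq,
    Finset.Nat.sum_antidiagonal_eq_sum_range_succ (fun i j => m.choose i * n.choose j)]

-- shift lemma 1
lemma L1 (q t : ℕ) (h2 : 2 ≤ t) (hq : t ≤ q) :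
    ∑ j ∈ Finset.range (t-1), (j+1) * (Nat.choose (q+1) (j+1) * Nat.choose (q-1) (t-2-j))
      = (q+1) * Nat.choose (2*q-1) (t-2) := by
  have e : ∀ j, (j+1) * (Nat.choose (q+1) (j+1) * Nat.choose (q-1) (t-2-j))
      = (q+1) * (Nat.choose q j * Nat.choose (q-1) (t-2-j)) := by
    intro j
    have h : (q+1) * Nat.choose q j = Nat.choose (q+1) (j+1) * (j+1) :=
      Nat.add_one_mul_choose_eq q j
    calc (j+1) * (Nat.choose (q+1) (j+1) * Nat.choose (q-1) (t-2-j))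
        = (Nat.choose (q+1) (j+1) * (j+1)) * Nat.choose (q-1) (t-2-j) := by ring
      _ = ((q+1) * Nat.choose q j) * Nat.choose (q-1) (t-2-j) := by rw [← h]
      _ = (q+1) * (Nat.choose q j * Nat.choose (q-1) (t-2-j)) := by ring
  rw [Finset.sum_congr rfl (fun j _ => e j), ← Finset.mul_sum]
  congr 1
  have ht1 : t - 1 = (t-2) + 1 := by omega
  have hqq : q + (q-1) = 2*q-1 := by omega
  rw [ht1, vander, hqq]

lemma L2 (q t : ℕ) (h2 : 2 ≤ t) (hq : t ≤ q) :
    ∑ j ∈ Finset.range t, (j+1) * (Nat.choose q j * Nat.choose q (t-1-j))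
      = q * Nat.choose (2*q-1) (t-2) + Nat.choose (2*q) (t-1) := by
  have split : ∀ j, (j+1) * (Nat.choose q j * Nat.choose q (t-1-j))
      = j * (Nat.choose q j * Nat.choose q (t-1-j)) + Nat.choose q j * Nat.choose q (t-1-j) := by
    intro j; ring
  rw [Finset.sum_congr rfl (fun j _ => split j), Finset.sum_add_distrib]
  congr 1
  · -- ∑ j in range t, j * (C q j * C q (t-1-j)) = q * C (2q-1) (t-2)
    rw [show Finset.range t = Finset.range ((t-1)+1) by congr 1; omega,
      Finset.sum_range_succ']
    simp only [Nat.zero_mul, zero_mul, add_zero]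
    have e : ∀ m, (m+1) * (Nat.choose q (m+1) * Nat.choose q (t-1-(m+1)))
        = q * (Nat.choose (q-1) m * Nat.choose q (t-2-m)) := by
      intro m
      have h : q * Nat.choose (q-1) m = Nat.choose ((q-1)+1) (m+1) * (m+1) := by
        have := Nat.add_one_mul_choose_eq (q-1) m
        have hq1 : q - 1 + 1 = q := by omega
        calc q * Nat.choose (q-1) m = ((q-1)+1) * Nat.choose (q-1) m := by rw [hq1]
          _ = Nat.choose ((q-1)+1) (m+1) * (m+1) := Nat.add_one_mul_choose_eq (q-1) m
      have hq1 : q - 1 + 1 = q := by omega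
      rw [hq1] at h
      have hidx : t - 1 - (m+1) = t - 2 - m := by omega
      calc (m+1) * (Nat.choose q (m+1) * Nat.choose q (t-1-(m+1)))
          = (Nat.choose q (m+1) * (m+1)) * Nat.choose q (t-1-(m+1)) := by ring
        _ = (q * Nat.choose (q-1) m) * Nat.choose q (t-1-(m+1)) := by rw [← h]
        _ = q * (Nat.choose (q-1) m * Nat.choose q (t-2-m)) := by rw [hidx]; ring
    rw [Finset.sum_congr rfl (fun m _ => e m), ← Finset.mul_sum]
    congr 1
    have hv := vander (q-1) q (t-2)
    rw [show Finset.range (t-1) = Finset.range ((t-2)+1) by congr 1; omega]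
    rw [show (q-1) + q = 2*q - 1 by omega] at hv
    rw [← hv]
  · have hv := vander q q (t-1)
    rw [show Finset.range t = Finset.range ((t-1)+1) by congr 1; omega]
    rw [show q + q = 2*q by omega] at hv
    exact hv

theorem stmt_4 (q t r : ℕ) (hr : 1 ≤ r) (ht : t = 2 * r) (hq : t + 1 ≤ q)
    (Δ : ℕ → ℤ)
    (hΔ : ∀ k, Δ k =
      (if k ≤ t then (Nat.choose (q + 1) (k - 1) * Nat.choose (q - 1) (t - k) : ℤ) else 0)
      - (if 2 ≤ k then (Nat.choose q (k - 2) * Nat.choose q (t + 1 - k) : ℤ) else 0)) :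
    ∑ k ∈ Finset.Icc 1 (t + 1), ((k : ℤ) - 1) * Δ k < 0 := by
  have h2 : 2 ≤ t := by omega
  have htq : t ≤ q := by omega
  -- rewrite the sum over Icc as sum over range
  have key : ∑ k ∈ Finset.Icc 1 (t + 1), ((k : ℤ) - 1) * Δ k
      = (∑ j ∈ Finset.range (t-1), (j+1) * (Nat.choose (q+1) (j+1) * Nat.choose (q-1) (t-2-j)) : ℕ)
        - (∑ j ∈ Finset.range t, (j+1) * (Nat.choose q j * Nat.choose q (t-1-j)) : ℕ) := by
    rw [← Finset.Ico_add_one_right_eq_Icc, Finset.sum_Ico_eq_sum_range]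
    rw [show t + 1 + 1 - 1 = t + 1 by omega]
    -- shift: sum over range (t+1) of f(1+i)
    rw [Finset.sum_range_succ']
    -- i = 0 term: ((1+0)-1) = 0
    push_cast
    rw [zero_mul, add_zero]
    -- now ∑ i in range t, ((1+(i+1))-1) * Δ (1+(i+1))
    have term : ∀ i, i ∈ Finset.range t →
        ((1:ℤ) + (↑i + 1) - 1) * Δ (1 + (i+1))
        = ((i:ℤ)+1) * (if i + 2 ≤ t then (Nat.choose (q+1) (i+1) * Nat.choose (q-1) (t-2-i) : ℤ) else 0)
          - ((i:ℤ)+1) * (Nat.choose q i * Nat.choose q (t-1-i) : ℤ) := by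
      intro i _
      rw [hΔ (1 + (i+1))]
      have hc1 : 1 + (i+1) ≤ t ↔ i + 2 ≤ t := by omega
      have hc2 : 2 ≤ 1 + (i+1) := by omega
      have hi1 : 1 + (i+1) - 1 = i + 1 := by omega
      have hi2 : t - (1 + (i+1)) = t - 2 - i := by omega
      have hi3 : 1 + (i+1) - 2 = i := by omega
      have hi4 : t + 1 - (1 + (i+1)) = t - 1 - i := by omega
      rw [hi1, hi2, hi3, hi4, if_pos hc2]
      simp only [hc1]
      ring
    rw [Finset.sum_congr rfl term, Finset.sum_sub_distrib]
    congr 1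
    · -- the A-part: drop the last index where the `if` is false
      rw [show Finset.range t = Finset.range ((t-1)+1) by congr 1; omega,
        Finset.sum_range_succ]
      have hfalse : ¬ ((t-1) + 2 ≤ t) := by omega
      rw [if_neg hfalse, mul_zero, add_zero]
      apply Finset.sum_congr rfl
      intro j hj
      simp only [Finset.mem_range] at hj
      rw [if_pos (by omega : j + 2 ≤ t)]
  rw [key, L1 q t h2 htq, L2 q t h2 htq]
  have pascal : Nat.choose (2*q) (t-1) = Nat.choose (2*q-1) (t-2) + Nat.choose (2*q-1) (t-1) := by
    have h := Nat.choose_succ_succ' (2*q-1) (t-2)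
    rw [show 2*q-1+1 = 2*q by omega, show t-2+1 = t-1 by omega] at h
    exact h
  have pos : 0 < Nat.choose (2*q-1) (t-1) := Nat.choose_pos (by omega)
  push_cast [pascal]
  have : (0:ℤ) < Nat.choose (2*q-1) (t-1) := by exact_mod_cast pos
  linarith
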